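/- In the six-sector configuration with 0 < r₀ ≤ a, the alternative area sum satisfies S₁ + S₃ + S₅ = (π/2)·a² + a²·[(x₂ − x₁ − x₃) + (1/2)·(sin 2x₂ − sin 2x₁ − sin 2x₃)], where xᵢ = arcsin((r₀/a)·sin(θᵢ − θ₀)) for i = 1, 2, 3. -/

import Mathlib

open Real

private noncomputable def sixF (a r₀ θ₀ : ℝ) (θ : ℝ) : ℝ :=
  a^2*θ + r₀^2/2 * Real.sin (2*(θ-θ₀))
      + r₀ * Real.sin (θ-θ₀) * Real.sqrt (a^2 - r₀^2 * Real.sin (θ-θ₀)^2)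
      + a^2 * Real.arcsin (r₀/a * Real.sin (θ-θ₀))

private lemma sixF_hasDerivAt (a r₀ θ₀ : ℝ) (ha : 0 < a) (hr₀a : r₀ ≤ a) (hr₀ : 0 < r₀)
    (θ : ℝ) (hc : Real.cos (θ - θ₀) ≠ 0) :
    HasDerivAt (sixF a r₀ θ₀)
      ((r₀ * Real.cos (θ - θ₀) + Real.sqrt (a ^ 2 - r₀ ^ 2 * Real.sin (θ - θ₀) ^ 2)) ^ 2) θ := by
  unfold sixF
  set s := Real.sin (θ - θ₀) with hs
  set c := Real.cos (θ - θ₀) with hcdef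
  have hsc : s^2 + c^2 = 1 := by rw [hs, hcdef]; exact Real.sin_sq_add_cos_sq _
  have hs2 : s^2 < 1 := by nlinarith [sq_pos_of_ne_zero hc]
  have hA : 0 < a^2 - r₀^2 * s^2 := by
    nlinarith [mul_nonneg (by nlinarith : (0:ℝ) ≤ a^2 - r₀^2) (sq_nonneg s),
      mul_pos (by positivity : (0:ℝ) < a^2) (by linarith : (0:ℝ) < 1 - s^2)]
  have hsqA : Real.sqrt (a^2 - r₀^2*s^2) ^ 2 = a^2 - r₀^2 * s^2 := Real.sq_sqrt hA.le
  have hsqApos : 0 < Real.sqrt (a^2 - r₀^2*s^2) := Real.sqrt_pos.2 hA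
  have hid : HasDerivAt (fun θ : ℝ => θ - θ₀) 1 θ := (hasDerivAt_id θ).sub_const θ₀
  have hsin : HasDerivAt (fun θ : ℝ => Real.sin (θ - θ₀)) c θ := by
    have h := (Real.hasDerivAt_sin (θ - θ₀)).comp θ hid
    rw [mul_one] at h; exact h
  have h1 : HasDerivAt (fun θ : ℝ => a^2*θ) (a^2) θ := by
    simpa using (hasDerivAt_id θ).const_mul (a^2)
  have h2 : HasDerivAt (fun θ : ℝ => r₀^2/2 * Real.sin (2*(θ-θ₀))) (r₀^2 * Real.cos (2*(θ-θ₀))) θ := by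
    have : HasDerivAt (fun θ : ℝ => 2*(θ-θ₀)) 2 θ := by simpa using hid.const_mul 2
    have := ((Real.hasDerivAt_sin (2*(θ-θ₀))).comp θ this).const_mul (r₀^2/2)
    exact this.congr_deriv (by ring)
  have hinner : HasDerivAt (fun θ : ℝ => a^2 - r₀^2 * Real.sin (θ-θ₀)^2) (-(r₀^2 * (2*s*c))) θ := by
    have hsq : HasDerivAt (fun θ : ℝ => Real.sin (θ-θ₀)^2) (2*s*c) θ := by
      have := hsin.pow 2
      exact this.congr_deriv (by norm_num [hs])
    simpa using (hsq.const_mul (r₀^2)).const_sub (a^2)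
  have hsqrt : HasDerivAt (fun θ : ℝ => Real.sqrt (a^2 - r₀^2 * Real.sin (θ-θ₀)^2))
      ((-(r₀^2 * (2*s*c))) / (2 * Real.sqrt (a^2 - r₀^2*s^2))) θ := by
    have := hinner.sqrt (by simp only [← hs]; positivity)
    simpa [← hs] using this
  have h3 : HasDerivAt (fun θ : ℝ => r₀ * Real.sin (θ-θ₀) * Real.sqrt (a^2 - r₀^2 * Real.sin (θ-θ₀)^2))
      ((r₀*c) * Real.sqrt (a^2 - r₀^2*s^2) + (r₀*s) * ((-(r₀^2 * (2*s*c))) / (2 * Real.sqrt (a^2 - r₀^2*s^2)))) θ := by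
    have hls : HasDerivAt (fun θ : ℝ => r₀ * Real.sin (θ-θ₀)) (r₀*c) θ := hsin.const_mul r₀
    exact hls.mul hsqrt
  have harg : HasDerivAt (fun θ : ℝ => r₀/a * Real.sin (θ-θ₀)) (r₀/a*c) θ := hsin.const_mul (r₀/a)
  have hbnd : (r₀/a*s)^2 < 1 := by
    have : r₀^2 * s^2 < a^2 := by nlinarith
    rw [div_mul_eq_mul_div, div_pow, div_lt_one (by positivity)]
    nlinarith
  have h4 : HasDerivAt (fun θ : ℝ => a^2 * Real.arcsin (r₀/a * Real.sin (θ-θ₀)))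
      (a^2 * ((1 / Real.sqrt (1 - (r₀/a*s)^2)) * (r₀/a*c))) θ := by
    have hne1 : r₀/a*s ≠ -1 := by intro h; rw [h] at hbnd; norm_num at hbnd
    have hne2 : r₀/a*s ≠ 1 := by intro h; rw [h] at hbnd; norm_num at hbnd
    have := (Real.hasDerivAt_arcsin hne1 hne2).comp θ harg
    simpa [← hs] using this.const_mul (a^2)
  have hsum := ((h1.add h2).add h3).add h4
  refine hsum.congr_deriv ?_; symm
  have hst : Real.sqrt (1 - (r₀/a*s)^2) = Real.sqrt (a^2 - r₀^2*s^2) / a := by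
    have h1 : 1 - (r₀/a*s)^2 = (a^2 - r₀^2*s^2)/a^2 := by
      field_simp
    rw [h1, Real.sqrt_div hA.le, Real.sqrt_sq ha.le]
  rw [hst, Real.cos_two_mul']
  field_simp
  linear_combination (Real.sqrt (a^2 - r₀^2*s^2) + r₀*c) * hsqA

private lemma sixF_continuous (a r₀ θ₀ : ℝ) : Continuous (sixF a r₀ θ₀) := by
  unfold sixF
  have h1 : Continuous (fun θ : ℝ => Real.arcsin (r₀/a * Real.sin (θ - θ₀))) :=
    Real.continuous_arcsin.comp (by fun_prop)
  exact ((((continuous_const.mul continuous_id).add (by fun_prop)).add (by fun_prop)).add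
    (continuous_const.mul h1))

private lemma six_integrand_continuous (a r₀ θ₀ : ℝ) :
    Continuous (fun θ : ℝ =>
      (r₀ * Real.cos (θ - θ₀) + Real.sqrt (a ^ 2 - r₀ ^ 2 * Real.sin (θ - θ₀) ^ 2)) ^ 2) := by
  fun_prop

private lemma sixF_integral (a r₀ θ₀ : ℝ) (ha : 0 < a) (hr₀ : 0 < r₀) (hr₀a : r₀ ≤ a)
    (α β : ℝ) :
    (∫ θ in α..β,
      (r₀ * Real.cos (θ - θ₀) + Real.sqrt (a ^ 2 - r₀ ^ 2 * Real.sin (θ - θ₀) ^ 2)) ^ 2)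
      = sixF a r₀ θ₀ β - sixF a r₀ θ₀ α := by
  apply MeasureTheory.integral_eq_of_hasDerivAt_off_countable
    (s := {θ : ℝ | Real.cos (θ - θ₀) = 0})
  · refine (Set.countable_range (fun k : ℤ => (2*(k:ℝ)+1)*π/2 + θ₀)).mono ?_
    intro θ hθ
    obtain ⟨k, hk⟩ := Real.cos_eq_zero_iff.mp hθ
    exact ⟨k, by linarith [hk]⟩
  · exact (sixF_continuous a r₀ θ₀).continuousOn
  · intro θ hθ
    exact sixF_hasDerivAt a r₀ θ₀ ha hr₀a hr₀ θ hθ.2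
  · exact (six_integrand_continuous a r₀ θ₀).intervalIntegrable α β

/-- Six-sector configuration with 0 < r₀ ≤ a:
S₁ + S₃ + S₅ = (π/2)·a² + a²·[(x₂ − x₁ − x₃) + (1/2)(sin 2x₂ − sin 2x₁ − sin 2x₃)],
where xᵢ = arcsin((r₀/a)·sin(θᵢ − θ₀)). -/
theorem six_sector_odd_sum (a r₀ θ₀ θ₁ θ₂ θ₃ : ℝ)
    (ha : 0 < a) (hr₀ : 0 < r₀) (hr₀a : r₀ ≤ a)
    (h12 : θ₁ < θ₂) (h23 : θ₂ < θ₃) (h31 : θ₃ < θ₁ + π)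
    (S : ℝ → ℝ → ℝ)
    (hS : ∀ α β : ℝ, α ≤ β → S α β = (1 / 2) * ∫ θ in α..β,
      (r₀ * Real.cos (θ - θ₀) + Real.sqrt (a ^ 2 - r₀ ^ 2 * Real.sin (θ - θ₀) ^ 2)) ^ 2)
    (x₁ x₂ x₃ : ℝ)
    (hx₁ : x₁ = Real.arcsin ((r₀ / a) * Real.sin (θ₁ - θ₀)))
    (hx₂ : x₂ = Real.arcsin ((r₀ / a) * Real.sin (θ₂ - θ₀)))
    (hx₃ : x₃ = Real.arcsin ((r₀ / a) * Real.sin (θ₃ - θ₀))) :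
    S θ₁ θ₂ + S θ₃ (θ₁ + π) + S (θ₂ + π) (θ₃ + π) =
      π / 2 * a ^ 2 + a ^ 2 * ((x₂ - x₁ - x₃) +
        (1 / 2) * (Real.sin (2 * x₂) - Real.sin (2 * x₁) - Real.sin (2 * x₃))) := by
  have hπ := Real.pi_pos
  have key : ∀ α β : ℝ, α ≤ β → S α β = (sixF a r₀ θ₀ β - sixF a r₀ θ₀ α) / 2 := by
    intro α β hab
    rw [hS α β hab, sixF_integral a r₀ θ₀ ha hr₀ hr₀a α β]; ring
  rw [key θ₁ θ₂ h12.le, key θ₃ (θ₁ + π) (by linarith), key (θ₂ + π) (θ₃ + π) (by linarith)]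
  -- the odd part G
  set G : ℝ → ℝ := fun θ => r₀ * Real.sin (θ-θ₀) * Real.sqrt (a^2 - r₀^2 * Real.sin (θ-θ₀)^2)
      + a^2 * Real.arcsin (r₀/a * Real.sin (θ-θ₀)) with hG
  have hshift : ∀ θ : ℝ, sixF a r₀ θ₀ (θ + π) = sixF a r₀ θ₀ θ + a^2*π - 2 * G θ := by
    intro θ
    unfold sixF
    have e1 : θ + π - θ₀ = (θ - θ₀) + π := by ring
    have e2 : 2*((θ - θ₀) + π) = 2*(θ-θ₀) + 2*π := by ring
    rw [e1, Real.sin_add_pi, e2, Real.sin_add_two_pi]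
    simp only [mul_neg, neg_neg, neg_sq, Real.arcsin_neg, hG]
    ring
  have hGx : ∀ (θ x : ℝ), x = Real.arcsin ((r₀ / a) * Real.sin (θ - θ₀)) →
      G θ = a^2 * x + a^2/2 * Real.sin (2*x) := by
    intro θ x hx
    set s := Real.sin (θ - θ₀) with hs
    have hs1 : -1 ≤ s := Real.neg_one_le_sin _
    have hs1' : s ≤ 1 := Real.sin_le_one _
    have hra : r₀ / a ≤ 1 := (div_le_one ha).2 hr₀a
    have hrapos : 0 < r₀ / a := by positivity
    have hb1 : -1 ≤ r₀ / a * s := by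
      nlinarith [mul_nonneg (by linarith : (0:ℝ) ≤ 1 - r₀/a) (by linarith : (0:ℝ) ≤ 1 + s)]
    have hb2 : r₀ / a * s ≤ 1 := by
      nlinarith [mul_nonneg (by linarith : (0:ℝ) ≤ 1 - r₀/a) (by linarith : (0:ℝ) ≤ 1 - s)]
    have hsinx : Real.sin x = r₀ / a * s := by rw [hx]; exact Real.sin_arcsin hb1 hb2
    have hcosx : Real.cos x = Real.sqrt (1 - (r₀/a*s)^2) := by rw [hx]; exact Real.cos_arcsin _
    have hA : 0 ≤ a^2 - r₀^2 * s^2 := by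
      nlinarith [mul_nonneg (by nlinarith : (0:ℝ) ≤ a^2 - r₀^2) (sq_nonneg s),
        mul_nonneg (by positivity : (0:ℝ) ≤ a^2) (by nlinarith [Real.sin_sq_le_one (θ - θ₀)] : (0:ℝ) ≤ 1 - s^2)]
    have hst : Real.sqrt (1 - (r₀/a*s)^2) = Real.sqrt (a^2 - r₀^2*s^2) / a := by
      have h1 : 1 - (r₀/a*s)^2 = (a^2 - r₀^2*s^2)/a^2 := by
        field_simp
      rw [h1, Real.sqrt_div hA, Real.sqrt_sq ha.le]
    show r₀ * s * Real.sqrt (a^2 - r₀^2 * s^2) + a^2 * Real.arcsin (r₀/a*s)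
      = a^2*x + a^2/2 * Real.sin (2*x)
    rw [Real.sin_two_mul, hsinx, hcosx, hst, hx]
    field_simp
    ring
  rw [hshift θ₁, hshift θ₂, hshift θ₃, hGx θ₁ x₁ hx₁, hGx θ₂ x₂ hx₂, hGx θ₃ x₃ hx₃]
  ring
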